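/- arXiv:2410.03669 — 2 statements merged into one kernel-verified Lean document; each statement's English description precedes it below -/
import Mathlib

section
/- Let T = (T₁,…,T_d) with each T_i a 2×2 operator matrix T_i = [[P_i, Q_i],[R_i, S_i]], P_i,Q_i,R_i,S_i ∈ B(H). Then max{Jtω_q(P)², Jtω_q(S)²} ≤ Jtω_q(T)², where P = (P₁,…,P_d), S = (S₁,…,S_d). -/
open scoped InnerProductSpace

variable {H : Type*} [NormedAddCommGroup H] [InnerProductSpace ℂ H]

/-- The joint `q`-numerical range of a `d`-tuple of bounded operators:
`{(⟨T₁x,y⟩,…,⟨T_dx,y⟩) : ‖x‖ = ‖y‖ = 1, ⟨x,y⟩ = q}` (with `⟨x,y⟩` linear in `x`). -/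
def JtW {d : ℕ} (q : ℂ) (T : Fin d → H →L[ℂ] H) : Set (Fin d → ℂ) :=
  {z | ∃ x y : H, ‖x‖ = 1 ∧ ‖y‖ = 1 ∧ ⟪y, x⟫_ℂ = q ∧ z = fun i => ⟪y, (T i) x⟫_ℂ}


/-- The `2×2` block operator `[[P,Q],[R,S]]` acting on `H ⊕ H` (with the Hilbert space
structure of `WithLp 2 (H × H)`). -/
noncomputable def blockOp [CompleteSpace H] (P Q R S : H →L[ℂ] H) :
    WithLp 2 (H × H) →L[ℂ] WithLp 2 (H × H) :=
  ((WithLp.prodContinuousLinearEquiv 2 ℂ H H).symm.toContinuousLinearMap) ∘L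
    (((P ∘L ContinuousLinearMap.fst ℂ H H + Q ∘L ContinuousLinearMap.snd ℂ H H).prod
      (R ∘L ContinuousLinearMap.fst ℂ H H + S ∘L ContinuousLinearMap.snd ℂ H H))) ∘L
    ((WithLp.prodContinuousLinearEquiv 2 ℂ H H).toContinuousLinearMap)

/-- The joint `q`-numerical radius. -/
noncomputable def Jtw {K : Type*} [NormedAddCommGroup K] [InnerProductSpace ℂ K] {d : ℕ}
    (q : ℂ) (T : Fin d → K →L[ℂ] K) : ℝ :=
  sSup {r | ∃ x y : K, ‖x‖ = 1 ∧ ‖y‖ = 1 ∧ ⟪y, x⟫_ℂ = q ∧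
    r = Real.sqrt (∑ i, ‖⟪y, (T i) x⟫_ℂ‖ ^ 2)}

/-- The single-operator `q`-numerical radius. -/
noncomputable def wq {K : Type*} [NormedAddCommGroup K] [InnerProductSpace ℂ K]
    (q : ℂ) (S : K →L[ℂ] K) : ℝ :=
  sSup {r | ∃ x y : K, ‖x‖ = 1 ∧ ‖y‖ = 1 ∧ ⟪y, x⟫_ℂ = q ∧ r = ‖⟪y, S x⟫_ℂ‖}

/-- The classical numerical radius. -/
noncomputable def nr {K : Type*} [NormedAddCommGroup K] [InnerProductSpace ℂ K]
    (T : K →L[ℂ] K) : ℝ :=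
  sSup {r | ∃ x : K, ‖x‖ = 1 ∧ r = ‖⟪x, T x⟫_ℂ‖}

lemma jtw_set_bddAbove {K : Type*} [NormedAddCommGroup K] [InnerProductSpace ℂ K] {d : ℕ}
    (q : ℂ) (T : Fin d → K →L[ℂ] K) :
    BddAbove {r | ∃ x y : K, ‖x‖ = 1 ∧ ‖y‖ = 1 ∧ ⟪y, x⟫_ℂ = q ∧
      r = Real.sqrt (∑ i, ‖⟪y, (T i) x⟫_ℂ‖ ^ 2)} := by
  refine ⟨Real.sqrt (∑ i, ‖T i‖ ^ 2), ?_⟩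
  rintro r ⟨x, y, hx, hy, hq, rfl⟩
  apply Real.sqrt_le_sqrt
  apply Finset.sum_le_sum
  intro i _
  apply pow_le_pow_left₀ (norm_nonneg _)
  calc ‖⟪y, (T i) x⟫_ℂ‖ ≤ ‖y‖ * ‖(T i) x‖ := by simpa using norm_inner_le_norm (𝕜 := ℂ) y ((T i) x)
    _ ≤ 1 * (‖T i‖ * ‖x‖) := by rw [hy]; gcongr; exact (T i).le_opNorm x
    _ = ‖T i‖ := by rw [hx]; ring

lemma jtw_aux {K : Type*} [NormedAddCommGroup K] [InnerProductSpace ℂ K] {d : ℕ}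
    (q : ℂ) (A : Fin d → H →L[ℂ] H) (T : Fin d → K →L[ℂ] K)
    (f : H → K) (hnorm : ∀ x : H, ‖f x‖ = ‖x‖)
    (hinner : ∀ x y : H, ⟪f y, f x⟫_ℂ = ⟪y, x⟫_ℂ)
    (hcompat : ∀ i (x y : H), ⟪f y, (T i) (f x)⟫_ℂ = ⟪y, (A i) x⟫_ℂ) :
    Jtw q A ^ 2 ≤ Jtw q T ^ 2 := by
  set s := {r | ∃ x y : H, ‖x‖ = 1 ∧ ‖y‖ = 1 ∧ ⟪y, x⟫_ℂ = q ∧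
    r = Real.sqrt (∑ i, ‖⟪y, (A i) x⟫_ℂ‖ ^ 2)}
  set t := {r | ∃ x y : K, ‖x‖ = 1 ∧ ‖y‖ = 1 ∧ ⟪y, x⟫_ℂ = q ∧
    r = Real.sqrt (∑ i, ‖⟪y, (T i) x⟫_ℂ‖ ^ 2)}
  have hsub : s ⊆ t := by
    rintro r ⟨x, y, hx, hy, hqq, rfl⟩
    exact ⟨f x, f y, by rw [hnorm, hx], by rw [hnorm, hy], by rw [hinner, hqq],
      by simp_rw [hcompat]⟩
  rcases Set.eq_empty_or_nonempty s with hs | hs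
  · have : Jtw q A = 0 := by rw [Jtw]; rw [show {r | ∃ x y : H, ‖x‖ = 1 ∧ ‖y‖ = 1 ∧ ⟪y, x⟫_ℂ = q ∧
      r = Real.sqrt (∑ i, ‖⟪y, (A i) x⟫_ℂ‖ ^ 2)} = s from rfl, hs, Real.sSup_empty]
    rw [this]
    simpa using sq_nonneg (Jtw q T)
  · have hA : Jtw q A ≤ Jtw q T := csSup_le_csSup (jtw_set_bddAbove q T) hs hsub
    have hA0 : 0 ≤ Jtw q A := by
      obtain ⟨r, x, y, hx, hy, hqq, rfl⟩ := hs
      exact le_trans (Real.sqrt_nonneg _)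
        (le_csSup (BddAbove.mono hsub (jtw_set_bddAbove q T)) ⟨x, y, hx, hy, hqq, rfl⟩)
    exact pow_le_pow_left₀ hA0 hA 2


theorem stmt_14 {d : ℕ} [CompleteSpace H] (q : ℂ) (hq : ‖q‖ ≤ 1)
    (P Q R S : Fin d → H →L[ℂ] H) :
    max (Jtw q P ^ 2) (Jtw q S ^ 2) ≤
      Jtw q (fun i => blockOp (P i) (Q i) (R i) (S i)) ^ 2 := by
  apply max_le
  · exact jtw_aux q P _ (fun x => (WithLp.equiv 2 (H × H)).symm (x, 0))
      (fun x => by rw [WithLp.prod_norm_eq_of_L2]; simp)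
      (fun x y => by simp [WithLp.prod_inner_apply])
      (fun i x y => by simp [blockOp, WithLp.prod_inner_apply])
  · exact jtw_aux q S _ (fun x => (WithLp.equiv 2 (H × H)).symm (0, x))
      (fun x => by rw [WithLp.prod_norm_eq_of_L2]; simp)
      (fun x y => by simp [WithLp.prod_inner_apply])
      (fun i x y => by simp [blockOp, WithLp.prod_inner_apply])
end

section
/- Let T = [[P, Q],[R, S]] be a 2×2 operator matrix on H ⊕ H with P,Q,R,S ∈ B(H) and |q| ≤ 1. Then ω_q(T) ≤ (|q|/2)(ω(P)+ω(S)+√((ω(P)−ω(S))² + (‖R‖+‖Q‖)²)) + √(1−|q|²)·(‖P‖²+‖Q‖²+‖R‖²+‖S‖²)^{1/2}. -/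
open scoped InnerProductSpace

variable {H : Type*} [NormedAddCommGroup H] [InnerProductSpace ℂ H]

section Helpers

lemma nr_nonneg' {K : Type*} [NormedAddCommGroup K] [InnerProductSpace ℂ K]
    (T : K →L[ℂ] K) : 0 ≤ nr T :=
  Real.sSup_nonneg (by rintro r ⟨x, hx, rfl⟩; positivity)

lemma nr_bdd' {K : Type*} [NormedAddCommGroup K] [InnerProductSpace ℂ K]
    (T : K →L[ℂ] K) : BddAbove {r | ∃ x : K, ‖x‖ = 1 ∧ r = ‖⟪x, T x⟫_ℂ‖} := by
  refine ⟨‖T‖, ?_⟩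
  rintro r ⟨x, hx, rfl⟩
  calc ‖⟪x, T x⟫_ℂ‖ = ‖⟪x, T x⟫_ℂ‖ := rfl
    _ ≤ ‖x‖ * ‖T x‖ := norm_inner_le_norm _ _
    _ ≤ ‖x‖ * (‖T‖ * ‖x‖) := by gcongr; exact T.le_opNorm x
    _ = ‖T‖ := by rw [hx]; ring

lemma abs_inner_le_nr' {K : Type*} [NormedAddCommGroup K] [InnerProductSpace ℂ K]
    (T : K →L[ℂ] K) (u : K) : ‖⟪u, T u⟫_ℂ‖ ≤ nr T * ‖u‖ ^ 2 := by
  rcases eq_or_ne u 0 with rfl | hu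
  · simp
  · have hn : ‖u‖ ≠ 0 := norm_ne_zero_iff.mpr hu
    set v : K := (‖u‖ : ℂ)⁻¹ • u with hv
    have hvn : ‖v‖ = 1 := by
      rw [hv, norm_smul]
      simp [hn]
    have hin : ⟪v, T v⟫_ℂ = ((‖u‖ : ℂ)⁻¹ * (‖u‖ : ℂ)⁻¹) * ⟪u, T u⟫_ℂ := by
      rw [hv, map_smul, inner_smul_left, inner_smul_right]
      simp [Complex.conj_inv]
      ring
    have h1 : ‖⟪v, T v⟫_ℂ‖ ≤ nr T :=
      le_csSup (nr_bdd' T) ⟨v, hvn, rfl⟩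
    have h2 : ‖⟪v, T v⟫_ℂ‖ = (‖u‖⁻¹) ^ 2 * ‖⟪u, T u⟫_ℂ‖ := by
      have habs : ‖(‖u‖ : ℂ)⁻¹‖ = ‖u‖⁻¹ := by
        simp
      rw [hin, norm_mul, norm_mul, habs]; ring
    rw [h2] at h1
    have h3 := mul_le_mul_of_nonneg_right h1 (by positivity : (0:ℝ) ≤ ‖u‖ ^ 2)
    calc ‖⟪u, T u⟫_ℂ‖
        = (‖u‖⁻¹) ^ 2 * ‖⟪u, T u⟫_ℂ‖ * ‖u‖ ^ 2 := by field_simp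
      _ ≤ nr T * ‖u‖ ^ 2 := h3

lemma scalar1' (p s c a b : ℝ) (hp : 0 ≤ p) (hs : 0 ≤ s)
    (hab : a ^ 2 + b ^ 2 = 1) :
    p * a ^ 2 + s * b ^ 2 + c * (a * b) ≤ (p + s + Real.sqrt ((p - s) ^ 2 + c ^ 2)) / 2 := by
  set D := Real.sqrt ((p - s) ^ 2 + c ^ 2) with hD
  have hD0 : 0 ≤ D := Real.sqrt_nonneg _
  have hD2 : D ^ 2 = (p - s) ^ 2 + c ^ 2 := Real.sq_sqrt (by positivity)
  set L := (p - s) * (a ^ 2 - b ^ 2) + 2 * a * b * c with hL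
  have hL2 : L ^ 2 ≤ D ^ 2 := by
    rw [hD2]
    have h1 : (a ^ 2 - b ^ 2) ^ 2 + (2 * a * b) ^ 2 = 1 := by
      have h2 : (a ^ 2 - b ^ 2) ^ 2 + (2 * a * b) ^ 2 = (a ^ 2 + b ^ 2) ^ 2 := by ring
      rw [h2, hab]; norm_num
    have key : ((p - s) ^ 2 + c ^ 2) * ((a ^ 2 - b ^ 2) ^ 2 + (2 * a * b) ^ 2) - L ^ 2
        = ((p - s) * (2 * a * b) - c * (a ^ 2 - b ^ 2)) ^ 2 := by rw [hL]; ring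
    have h3 : L ^ 2 ≤ ((p - s) ^ 2 + c ^ 2) * ((a ^ 2 - b ^ 2) ^ 2 + (2 * a * b) ^ 2) := by
      linarith [key, sq_nonneg ((p - s) * (2 * a * b) - c * (a ^ 2 - b ^ 2))]
    rw [h1, mul_one] at h3
    exact h3
  have hLD : L ≤ D := by nlinarith [hL2, hD0, sq_nonneg (L + D)]
  nlinarith [hLD, hab, hp, hs]

lemma scalar2' (p q r s a b : ℝ) (hp : 0 ≤ p) (hq : 0 ≤ q) (hr : 0 ≤ r) (hs : 0 ≤ s)
    (hab : a ^ 2 + b ^ 2 = 1) :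
    (p * a + q * b) ^ 2 + (r * a + s * b) ^ 2 ≤ p ^ 2 + q ^ 2 + r ^ 2 + s ^ 2 := by
  nlinarith [sq_nonneg (p * b - q * a), sq_nonneg (r * b - s * a)]

variable {H : Type*} [NormedAddCommGroup H] [InnerProductSpace ℂ H]

lemma blockOp_nr_bound [CompleteSpace H] (P Q R S : H →L[ℂ] H)
    (x : WithLp 2 (H × H)) (hx : ‖x‖ = 1) :
    ‖⟪x, blockOp P Q R S x⟫_ℂ‖ ≤
      (nr P + nr S + Real.sqrt ((nr P - nr S) ^ 2 + (‖R‖ + ‖Q‖) ^ 2)) / 2 := by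
  have hcomp : ⟪x, blockOp P Q R S x⟫_ℂ
      = ⟪x.fst, P x.fst⟫_ℂ + ⟪x.fst, Q x.snd⟫_ℂ + ⟪x.snd, R x.fst⟫_ℂ + ⟪x.snd, S x.snd⟫_ℂ := by
    have h1 : (blockOp P Q R S x).fst = P x.fst + Q x.snd := rfl
    have h2 : (blockOp P Q R S x).snd = R x.fst + S x.snd := rfl
    rw [WithLp.prod_inner_apply]
    change ⟪x.fst, (blockOp P Q R S x).fst⟫_ℂ + ⟪x.snd, (blockOp P Q R S x).snd⟫_ℂ = _
    rw [h1, h2, inner_add_right, inner_add_right]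
    ring
  have hab : ‖x.fst‖ ^ 2 + ‖x.snd‖ ^ 2 = 1 := by
    have h := WithLp.prod_norm_sq_eq_of_L2 x
    rw [hx] at h
    simpa using h.symm
  have hPb : ‖⟪x.fst, P x.fst⟫_ℂ‖ ≤ nr P * ‖x.fst‖ ^ 2 := abs_inner_le_nr' P x.fst
  have hSb : ‖⟪x.snd, S x.snd⟫_ℂ‖ ≤ nr S * ‖x.snd‖ ^ 2 := abs_inner_le_nr' S x.snd
  have hQb : ‖⟪x.fst, Q x.snd⟫_ℂ‖ ≤ ‖Q‖ * (‖x.fst‖ * ‖x.snd‖) := by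
    calc ‖⟪x.fst, Q x.snd⟫_ℂ‖ = ‖⟪x.fst, Q x.snd⟫_ℂ‖ := rfl
      _ ≤ ‖x.fst‖ * ‖Q x.snd‖ := norm_inner_le_norm _ _
      _ ≤ ‖x.fst‖ * (‖Q‖ * ‖x.snd‖) := by gcongr; exact Q.le_opNorm _
      _ = ‖Q‖ * (‖x.fst‖ * ‖x.snd‖) := by ring
  have hRb : ‖⟪x.snd, R x.fst⟫_ℂ‖ ≤ ‖R‖ * (‖x.fst‖ * ‖x.snd‖) := by
    calc ‖⟪x.snd, R x.fst⟫_ℂ‖ = ‖⟪x.snd, R x.fst⟫_ℂ‖ := rfl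
      _ ≤ ‖x.snd‖ * ‖R x.fst‖ := norm_inner_le_norm _ _
      _ ≤ ‖x.snd‖ * (‖R‖ * ‖x.fst‖) := by gcongr; exact R.le_opNorm _
      _ = ‖R‖ * (‖x.fst‖ * ‖x.snd‖) := by ring
  have htri : ‖⟪x, blockOp P Q R S x⟫_ℂ‖
      ≤ ‖⟪x.fst, P x.fst⟫_ℂ‖ + ‖⟪x.fst, Q x.snd⟫_ℂ‖
        + ‖⟪x.snd, R x.fst⟫_ℂ‖ + ‖⟪x.snd, S x.snd⟫_ℂ‖ := by
    rw [hcomp]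
    calc ‖⟪x.fst, P x.fst⟫_ℂ + ⟪x.fst, Q x.snd⟫_ℂ + ⟪x.snd, R x.fst⟫_ℂ
          + ⟪x.snd, S x.snd⟫_ℂ‖
        ≤ ‖⟪x.fst, P x.fst⟫_ℂ + ⟪x.fst, Q x.snd⟫_ℂ + ⟪x.snd, R x.fst⟫_ℂ‖
          + ‖⟪x.snd, S x.snd⟫_ℂ‖ := norm_add_le _ _
      _ ≤ ‖⟪x.fst, P x.fst⟫_ℂ + ⟪x.fst, Q x.snd⟫_ℂ‖
          + ‖⟪x.snd, R x.fst⟫_ℂ‖ + ‖⟪x.snd, S x.snd⟫_ℂ‖ := by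
            gcongr; exact norm_add_le _ _
      _ ≤ ‖⟪x.fst, P x.fst⟫_ℂ‖ + ‖⟪x.fst, Q x.snd⟫_ℂ‖
          + ‖⟪x.snd, R x.fst⟫_ℂ‖ + ‖⟪x.snd, S x.snd⟫_ℂ‖ := by
            gcongr; exact norm_add_le _ _
  have hscal := scalar1' (nr P) (nr S) (‖R‖ + ‖Q‖) ‖x.fst‖ ‖x.snd‖
    (nr_nonneg' P) (nr_nonneg' S) hab
  have h0 : (0:ℝ) ≤ ‖x.fst‖ * ‖x.snd‖ := by positivity
  nlinarith [htri, hPb, hSb, hQb, hRb, hscal]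

lemma blockOp_norm_bound [CompleteSpace H] (P Q R S : H →L[ℂ] H)
    (x : WithLp 2 (H × H)) (hx : ‖x‖ = 1) :
    ‖blockOp P Q R S x‖ ≤ Real.sqrt (‖P‖ ^ 2 + ‖Q‖ ^ 2 + ‖R‖ ^ 2 + ‖S‖ ^ 2) := by
  have hab : ‖x.fst‖ ^ 2 + ‖x.snd‖ ^ 2 = 1 := by
    have h := WithLp.prod_norm_sq_eq_of_L2 x
    rw [hx] at h
    simpa using h.symm
  have hsq : ‖blockOp P Q R S x‖ ^ 2
      = ‖P x.fst + Q x.snd‖ ^ 2 + ‖R x.fst + S x.snd‖ ^ 2 := by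
    have h1 : (blockOp P Q R S x).fst = P x.fst + Q x.snd := rfl
    have h2 : (blockOp P Q R S x).snd = R x.fst + S x.snd := rfl
    rw [WithLp.prod_norm_sq_eq_of_L2, h1, h2]
  have h1 : ‖P x.fst + Q x.snd‖ ≤ ‖P‖ * ‖x.fst‖ + ‖Q‖ * ‖x.snd‖ := by
    calc ‖P x.fst + Q x.snd‖ ≤ ‖P x.fst‖ + ‖Q x.snd‖ := norm_add_le _ _
      _ ≤ ‖P‖ * ‖x.fst‖ + ‖Q‖ * ‖x.snd‖ := by
          gcongr <;> [exact P.le_opNorm _; exact Q.le_opNorm _]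
  have h2 : ‖R x.fst + S x.snd‖ ≤ ‖R‖ * ‖x.fst‖ + ‖S‖ * ‖x.snd‖ := by
    calc ‖R x.fst + S x.snd‖ ≤ ‖R x.fst‖ + ‖S x.snd‖ := norm_add_le _ _
      _ ≤ ‖R‖ * ‖x.fst‖ + ‖S‖ * ‖x.snd‖ := by
          gcongr <;> [exact R.le_opNorm _; exact S.le_opNorm _]
  have hscal := scalar2' ‖P‖ ‖Q‖ ‖R‖ ‖S‖ ‖x.fst‖ ‖x.snd‖
    (norm_nonneg P) (norm_nonneg Q) (norm_nonneg R) (norm_nonneg S) hab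
  have hle : ‖blockOp P Q R S x‖ ^ 2 ≤ ‖P‖ ^ 2 + ‖Q‖ ^ 2 + ‖R‖ ^ 2 + ‖S‖ ^ 2 := by
    rw [hsq]
    have e1 : ‖P x.fst + Q x.snd‖ ^ 2 ≤ (‖P‖ * ‖x.fst‖ + ‖Q‖ * ‖x.snd‖) ^ 2 := by
      have := norm_nonneg (P x.fst + Q x.snd); nlinarith [h1]
    have e2 : ‖R x.fst + S x.snd‖ ^ 2 ≤ (‖R‖ * ‖x.fst‖ + ‖S‖ * ‖x.snd‖) ^ 2 := by
      have := norm_nonneg (R x.fst + S x.snd); nlinarith [h2]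
    linarith [hscal]
  calc ‖blockOp P Q R S x‖ = Real.sqrt (‖blockOp P Q R S x‖ ^ 2) :=
        (Real.sqrt_sq (norm_nonneg _)).symm
    _ ≤ Real.sqrt (‖P‖ ^ 2 + ‖Q‖ ^ 2 + ‖R‖ ^ 2 + ‖S‖ ^ 2) := Real.sqrt_le_sqrt hle

end Helpers

theorem stmt_15 [CompleteSpace H] (q : ℂ) (hq : ‖q‖ ≤ 1) (P Q R S : H →L[ℂ] H) :
    wq q (blockOp P Q R S) ≤
      ‖q‖ / 2 *
          (nr P + nr S + Real.sqrt ((nr P - nr S) ^ 2 + (‖R‖ + ‖Q‖) ^ 2)) +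
        Real.sqrt (1 - ‖q‖ ^ 2) *
          Real.sqrt (‖P‖ ^ 2 + ‖Q‖ ^ 2 + ‖R‖ ^ 2 + ‖S‖ ^ 2) := by
  set A := (nr P + nr S + Real.sqrt ((nr P - nr S) ^ 2 + (‖R‖ + ‖Q‖) ^ 2)) / 2 with hA
  set M := Real.sqrt (‖P‖ ^ 2 + ‖Q‖ ^ 2 + ‖R‖ ^ 2 + ‖S‖ ^ 2) with hM
  have hA0 : 0 ≤ A := by
    have := nr_nonneg' P
    have := nr_nonneg' S
    have := Real.sqrt_nonneg ((nr P - nr S) ^ 2 + (‖R‖ + ‖Q‖) ^ 2)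
    rw [hA]; linarith
  have hM0 : 0 ≤ M := Real.sqrt_nonneg _
  have hq0 : 0 ≤ ‖q‖ := norm_nonneg q
  have hs0 : 0 ≤ Real.sqrt (1 - ‖q‖ ^ 2) := Real.sqrt_nonneg _
  have hRHS : ‖q‖ / 2 *
        (nr P + nr S + Real.sqrt ((nr P - nr S) ^ 2 + (‖R‖ + ‖Q‖) ^ 2)) +
      Real.sqrt (1 - ‖q‖ ^ 2) * M
      = ‖q‖ * A + Real.sqrt (1 - ‖q‖ ^ 2) * M := by
    rw [hA]; ring
  rw [wq, hRHS]
  apply Real.sSup_le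
  · rintro r ⟨x, y, hx, hy, hyx, rfl⟩
    set T := blockOp P Q R S with hT
    set w : WithLp 2 (H × H) := y - (starRingEnd ℂ q) • x with hw
    have hdec : ⟪y, T x⟫_ℂ = q * ⟪x, T x⟫_ℂ + ⟪w, T x⟫_ℂ := by
      rw [hw, inner_sub_left, inner_smul_left, Complex.conj_conj]
      ring
    have hinner : ⟪y, (starRingEnd ℂ q) • x⟫_ℂ = (starRingEnd ℂ q) * q := by
      rw [inner_smul_right, hyx]
    have hw2 : ‖w‖ ^ 2 = 1 - ‖q‖ ^ 2 := by
      have hns := @norm_sub_sq ℂ _ _ _ _ y ((starRingEnd ℂ q) • x)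
      have hre : RCLike.re ⟪y, (starRingEnd ℂ q) • x⟫_ℂ = ‖q‖ ^ 2 := by
        rw [hinner]
        have : (starRingEnd ℂ q) * q = (‖q‖ ^ 2 : ℝ) := by
          rw [Complex.conj_mul']
          norm_cast
        rw [this]
        norm_cast
      have hnsmul : ‖(starRingEnd ℂ q) • x‖ = ‖q‖ := by
        rw [norm_smul, hx, mul_one]
        simp
      rw [hw, hns, hre, hy, hnsmul]
      ring
    have hwn : ‖w‖ = Real.sqrt (1 - ‖q‖ ^ 2) := by
      rw [← hw2, Real.sqrt_sq (norm_nonneg _)]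
    calc ‖⟪y, T x⟫_ℂ‖
        = ‖q * ⟪x, T x⟫_ℂ + ⟪w, T x⟫_ℂ‖ := by rw [hdec]
      _ ≤ ‖q * ⟪x, T x⟫_ℂ‖ + ‖⟪w, T x⟫_ℂ‖ := norm_add_le _ _
      _ = ‖q‖ * ‖⟪x, T x⟫_ℂ‖ + ‖⟪w, T x⟫_ℂ‖ := by rw [norm_mul]
      _ ≤ ‖q‖ * A + ‖w‖ * ‖T x‖ := by
          gcongr
          · exact blockOp_nr_bound P Q R S x hx
          · exact norm_inner_le_norm _ _
      _ ≤ ‖q‖ * A + Real.sqrt (1 - ‖q‖ ^ 2) * M := by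
          have h1 : ‖w‖ * ‖T x‖ ≤ Real.sqrt (1 - ‖q‖ ^ 2) * M := by
            rw [hwn]
            exact mul_le_mul_of_nonneg_left (blockOp_norm_bound P Q R S x hx) hs0
          linarith
  · positivity
end
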